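/- arXiv:2408.13410 — 2 statements merged into one kernel-verified Lean document; each statement's English description precedes it below -/
import Mathlib

section
/- Let R be a commutative ring with elements a, z invertible and γ satisfying z*γ = a + a⁻¹ - z. Define K and P : ℕ → R by K 0 = P 0 = γ, K 1 = P 1 = a⁻¹, K (q+2) = z * a^(q+1) + z * K (q+1) - K q, and P (q+2) = z * a^(q+1) + z * P (q+1). Define g : ℕ → R by g 0 = 1, g 1 = z, g (n+2) = z * g (n+1) - g n. Then for all q ≥ 2, K q = P q - ∑_{i=0}^{q-2} P i * g (q-2-i). -/
/-- Theorem 7.5: the Kauffman polynomial recursion `K` for `(2,q)` torus knots satisfies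
`K q = P q - ∑_{i=0}^{q-2} P i * g (q-2-i)` for all `q ≥ 2`, where `P` is the
perfect-matching partition function recursion and `g` is the Chebyshev-like sequence. -/
theorem stmt_3 {R : Type*} [CommRing R] (a ai z zi γ : R)
    (ha : a * ai = 1) (hz : z * zi = 1) (hγ : z * γ = a + ai - z)
    (K P g : ℕ → R)
    (hK0 : K 0 = γ) (hK1 : K 1 = ai)
    (hKrec : ∀ q : ℕ, K (q + 2) = z * a ^ (q + 1) + z * K (q + 1) - K q)
    (hP0 : P 0 = γ) (hP1 : P 1 = ai)
    (hPrec : ∀ q : ℕ, P (q + 2) = z * a ^ (q + 1) + z * P (q + 1))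
    (hg0 : g 0 = 1) (hg1 : g 1 = z)
    (hgrec : ∀ n : ℕ, g (n + 2) = z * g (n + 1) - g n) :
    ∀ q : ℕ, 2 ≤ q → K q = P q - ∑ i ∈ Finset.range (q - 1), P i * g (q - 2 - i) := by
  have key : ∀ q : ℕ,
      (K (q+2) = P (q+2) - ∑ i ∈ Finset.range (q+1), P i * g (q - i)) ∧
      (K (q+3) = P (q+3) - ∑ i ∈ Finset.range (q+2), P i * g (q+1 - i)) := by
    intro q
    induction q with
    | zero =>
      constructor
      · rw [hKrec 0, hPrec 0, hK0, hK1]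
        simp [hP0, hP1, hg0]
      · have h2 : K 3 = z * a ^ 2 + z * K 2 - K 1 := hKrec 1
        have h2' : P 3 = z * a ^ 2 + z * P 2 := hPrec 1
        rw [h2, h2', hKrec 0, hPrec 0, hK0, hK1]
        simp [Finset.sum_range_succ, hP0, hP1, hg0, hg1]
        ring
    | succ n ih =>
      refine ⟨ih.2, ?_⟩
      have hsum : ∑ i ∈ Finset.range (n+3), P i * g (n+2-i)
          = z * ∑ i ∈ Finset.range (n+2), P i * g (n+1-i) + P (n+2)
            - ∑ i ∈ Finset.range (n+1), P i * g (n-i) := by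
        rw [Finset.sum_range_succ, Finset.sum_range_succ]
        have h1 : n+2-(n+1) = 1 := by omega
        have h2 : n+2-(n+2) = 0 := by omega
        rw [h1, h2, hg0, hg1]
        rw [Finset.sum_range_succ (f := fun i => P i * g (n+1-i))]
        have h3 : ∀ i ∈ Finset.range (n+1),
            P i * g (n+2-i) = z * (P i * g (n+1-i)) - P i * g (n-i) := by
          intro i hi
          simp only [Finset.mem_range] at hi
          have e1 : n+2-i = (n-i)+2 := by omega
          have e2 : n+1-i = (n-i)+1 := by omega
          rw [e1, e2, hgrec]
          ring
        rw [Finset.sum_congr rfl h3, Finset.sum_sub_distrib, ← Finset.mul_sum]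
        have h4 : n+1-(n+1) = 0 := by omega
        rw [h4, hg0]
        ring
      have hK4 : K (n+1+3) = z * a ^ (n+3) + z * K (n+3) - K (n+2) := hKrec (n+2)
      have hP4 : P (n+1+3) = z * a ^ (n+3) + z * P (n+3) := hPrec (n+2)
      have goal_eq : (n+1+1 : ℕ) = n + 2 := rfl
      show K (n+1+3) = P (n+1+3) - ∑ i ∈ Finset.range (n+3), P i * g (n+2 - i)
      rw [hK4, hP4, ih.1, ih.2, hsum]
      ring
  intro q hq
  obtain ⟨n, rfl⟩ : ∃ n, q = n + 2 := ⟨q - 2, by omega⟩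
  exact (key n).1
end

section
/- For q ≥ 1, consider the bipartite graph G with vertex set {v_1, …, v_q} ⊔ {w_1, …, w_q} and edge set consisting of: edges v_i–w_i for 1 ≤ i ≤ q-1, edges v_{i+1}–w_i for 1 ≤ i ≤ q-1, and edges v_i–w_q for all 1 ≤ i ≤ q. Then G has exactly q perfect matchings. -/
/-- The balanced overlaid Tait graph of the `(2,q)` torus knot: a bipartite graph on
`{v_1, …, v_q} ⊔ {w_1, …, w_q}` (zero-indexed) with edges `v_i – w_i` and `v_{i+1} – w_i`
for `1 ≤ i ≤ q-1`, and `v_i – w_q` for all `i`. -/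
def torusBOTGraph (q : ℕ) : SimpleGraph (Fin q ⊕ Fin q) :=
  SimpleGraph.fromRel (fun x y =>
    match x, y with
    | Sum.inl i, Sum.inr j =>
        ((i : ℕ) = (j : ℕ) ∧ (i : ℕ) < q - 1) ∨
        ((i : ℕ) = (j : ℕ) + 1 ∧ (j : ℕ) < q - 1) ∨
        (j : ℕ) = q - 1
    | _, _ => False)

lemma tbg_adj {q : ℕ} (i j : Fin q) :
    (torusBOTGraph q).Adj (Sum.inl i) (Sum.inr j) ↔
      ((i : ℕ) = (j : ℕ) ∧ (i : ℕ) < q - 1) ∨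
      ((i : ℕ) = (j : ℕ) + 1 ∧ (j : ℕ) < q - 1) ∨
      (j : ℕ) = q - 1 := by
  simp [torusBOTGraph, SimpleGraph.fromRel_adj]

lemma tbg_not_adj_ll {q : ℕ} (i j : Fin q) :
    ¬ (torusBOTGraph q).Adj (Sum.inl i) (Sum.inl j) := by
  simp [torusBOTGraph, SimpleGraph.fromRel_adj]

lemma tbg_not_adj_rr {q : ℕ} (i j : Fin q) :
    ¬ (torusBOTGraph q).Adj (Sum.inr i) (Sum.inr j) := by
  simp [torusBOTGraph, SimpleGraph.fromRel_adj]

/-- partner relation: `v_i` is matched with `w_j` in the matching determined by `k`. -/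
def pmRel (q : ℕ) (k : Fin q) (i j : Fin q) : Prop :=
  ((j : ℕ) < (k : ℕ) ∧ (i : ℕ) = (j : ℕ)) ∨
  ((k : ℕ) ≤ (j : ℕ) ∧ (j : ℕ) < q - 1 ∧ (i : ℕ) = (j : ℕ) + 1) ∨
  ((j : ℕ) = q - 1 ∧ (i : ℕ) = (k : ℕ))

def pMatch (q : ℕ) (k : Fin q) : (torusBOTGraph q).Subgraph where
  verts := Set.univ
  Adj x y := match x, y with
    | Sum.inl i, Sum.inr j => pmRel q k i j
    | Sum.inr j, Sum.inl i => pmRel q k i j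
    | _, _ => False
  adj_sub := by
    rintro (i | i) (j | j) h
    · exact h.elim
    · rw [tbg_adj]
      have := k.2; have := i.2; have := j.2
      rcases h with h | h | h <;> omega
    · apply (torusBOTGraph q).adj_symm
      rw [tbg_adj]
      have := k.2; have := i.2; have := j.2
      rcases h with h | h | h <;> omega
    · exact h.elim
  edge_vert := fun _ => Set.mem_univ _
  symm := ⟨by rintro (i | i) (j | j) h <;> exact h⟩

lemma pMatch_adj {q : ℕ} (k : Fin q) (i j : Fin q) :
    (pMatch q k).Adj (Sum.inl i) (Sum.inr j) ↔ pmRel q k i j := Iff.rfl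

lemma pmRel_unique_j {q : ℕ} (k : Fin q) (i j j' : Fin q)
    (h : pmRel q k i j) (h' : pmRel q k i j') : j = j' := by
  have := k.2; have := i.2; have := j.2; have := j'.2
  apply Fin.ext
  rcases h with h | h | h <;> rcases h' with h' | h' | h' <;> omega

lemma pmRel_unique_i {q : ℕ} (k : Fin q) (i i' j : Fin q)
    (h : pmRel q k i j) (h' : pmRel q k i' j) : i = i' := by
  have := k.2; have := i.2; have := j.2; have := i'.2
  apply Fin.ext
  rcases h with h | h | h <;> rcases h' with h' | h' | h' <;> omega

lemma pMatch_isPerfectMatching {q : ℕ} (k : Fin q) :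
    (pMatch q k).IsPerfectMatching := by
  constructor
  · rintro (i | j) -
    · -- vertex v_i : find its w-partner
      have hq : 0 < q := k.pos
      have hik := k.2; have hii := i.2
      by_cases h1 : (i : ℕ) < (k : ℕ)
      · exact ⟨Sum.inr i, Or.inl ⟨h1, rfl⟩, by
          rintro (j | j) hj
          · exact hj.elim
          · have := j.2
            rcases hj with h | h | h <;> (apply congrArg; apply Fin.ext) <;> omega⟩
      · by_cases h2 : (i : ℕ) = (k : ℕ)
        · exact ⟨Sum.inr ⟨q - 1, by omega⟩, Or.inr (Or.inr ⟨rfl, h2⟩), by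
            rintro (j | j) hj
            · exact hj.elim
            · have := j.2
              rcases hj with h | h | h <;> (apply congrArg; apply Fin.ext) <;> simp <;> omega⟩
        · exact ⟨Sum.inr ⟨(i : ℕ) - 1, by omega⟩, Or.inr (Or.inl (by simp; omega)), by
            rintro (j | j) hj
            · exact hj.elim
            · have := j.2
              rcases hj with h | h | h <;> (apply congrArg; apply Fin.ext) <;> simp <;> omega⟩
    · -- vertex w_j : find its v-partner
      have hq : 0 < q := k.pos
      have hik := k.2; have hjj := j.2
      by_cases h1 : (j : ℕ) = q - 1
      · exact ⟨Sum.inl k, Or.inr (Or.inr ⟨h1, rfl⟩), by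
          rintro (i | i) hi
          · have := i.2
            rcases hi with h | h | h <;> (apply congrArg; apply Fin.ext) <;> omega
          · exact hi.elim⟩
      · by_cases h2 : (j : ℕ) < (k : ℕ)
        · exact ⟨Sum.inl j, Or.inl ⟨h2, rfl⟩, by
            rintro (i | i) hi
            · have := i.2
              rcases hi with h | h | h <;> (apply congrArg; apply Fin.ext) <;> omega
            · exact hi.elim⟩
        · exact ⟨Sum.inl ⟨(j : ℕ) + 1, by omega⟩, Or.inr (Or.inl (by simp; omega)), by
            rintro (i | i) hi
            · have := i.2
              rcases hi with h | h | h <;> (apply congrArg; apply Fin.ext) <;> simp <;> omega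
            · exact hi.elim⟩
  · intro v; exact Set.mem_univ v

lemma eq_pMatch {q : ℕ} (hq : 1 ≤ q) (M : (torusBOTGraph q).Subgraph)
    (hM : M.IsPerfectMatching) : ∃ k : Fin q, M = pMatch q k := by
  have huniq : ∀ v a b, M.Adj v a → M.Adj v b → a = b := fun v a b ha hb =>
    ((hM.1 (hM.2 v)).unique ha hb)
  set wlast : Fin q := ⟨q - 1, by omega⟩ with hwlast
  obtain ⟨w, hw, -⟩ := hM.1 (hM.2 (Sum.inr wlast))
  obtain (k | j0) := w
  case inr => exact absurd (M.adj_sub hw) (tbg_not_adj_rr _ _)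
  have hk2 := k.2
  -- A: for j < k, v_j matched to w_j
  have A : ∀ j : ℕ, ∀ _ : j < (k : ℕ), M.Adj (Sum.inl ⟨j, by omega⟩) (Sum.inr ⟨j, by omega⟩) := by
    intro j
    induction j using Nat.strong_induction_on with
    | _ j IH =>
      intro hj
      obtain ⟨w, hw', -⟩ := hM.1 (hM.2 (Sum.inl (⟨j, by omega⟩ : Fin q)))
      obtain (i' | j') := w
      case inl => exact absurd (M.adj_sub hw') (tbg_not_adj_ll _ _)
      have hj'2 := j'.2
      have hG := (tbg_adj _ _).mp (M.adj_sub hw')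
      simp only [Fin.val_mk] at hG
      rcases hG with h | h | h
      · have : Sum.inr j' = (Sum.inr ⟨j, by omega⟩ : Fin q ⊕ Fin q) := by
          apply congrArg; apply Fin.ext; simp only [Fin.val_mk]; omega
        exact this ▸ hw'
      · exfalso
        have hIH := IH (j' : ℕ) (by omega) (by omega)
        have := huniq (Sum.inr j') _ _ (M.adj_symm hw')
          (M.adj_symm (by convert hIH using 2))
        simp only [Sum.inl.injEq, Fin.mk.injEq] at this
        omega
      · exfalso
        have hj'w : (Sum.inr j' : Fin q ⊕ Fin q) = Sum.inr wlast := by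
          apply congrArg; apply Fin.ext; simpa [hwlast]
        rw [hj'w] at hw'
        have := huniq (Sum.inr wlast) _ _ (M.adj_symm hw') hw
        simp only [Sum.inl.injEq] at this
        have := congrArg Fin.val this
        simp at this; omega
  -- B: for k < m ≤ q-1, v_m matched to w_{m-1}
  have B : ∀ d : ℕ, ∀ m : ℕ, ∀ _ : q - 1 - m = d, ∀ _ : (k : ℕ) < m, ∀ _ : m ≤ q - 1,
      M.Adj (Sum.inl ⟨m, by omega⟩) (Sum.inr ⟨m - 1, by omega⟩) := by
    intro d
    induction d using Nat.strong_induction_on with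
    | _ d IH =>
      intro m hd hkm hm
      obtain ⟨w, hw', -⟩ := hM.1 (hM.2 (Sum.inl (⟨m, by omega⟩ : Fin q)))
      obtain (i' | j') := w
      case inl => exact absurd (M.adj_sub hw') (tbg_not_adj_ll _ _)
      have hj'2 := j'.2
      have hG := (tbg_adj _ _).mp (M.adj_sub hw')
      simp only [Fin.val_mk] at hG
      rcases hG with h | h | h
      · exfalso
        have hIH := IH (q - 1 - (m + 1)) (by omega) (m + 1) rfl (by omega) (by omega)
        have : Sum.inr j' = (Sum.inr ⟨m + 1 - 1, by omega⟩ : Fin q ⊕ Fin q) := by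
          apply congrArg; apply Fin.ext; simp; omega
        rw [this] at hw'
        have := huniq _ _ _ (M.adj_symm hw') (M.adj_symm hIH)
        simp only [Sum.inl.injEq, Fin.mk.injEq] at this
        omega
      · have : Sum.inr j' = (Sum.inr ⟨m - 1, by omega⟩ : Fin q ⊕ Fin q) := by
          apply congrArg; apply Fin.ext; simp; omega
        exact this ▸ hw'
      · exfalso
        have hj'w : (Sum.inr j' : Fin q ⊕ Fin q) = Sum.inr wlast := by
          apply congrArg; apply Fin.ext; simpa [hwlast]
        rw [hj'w] at hw'
        have := huniq (Sum.inr wlast) _ _ (M.adj_symm hw') hw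
        simp only [Sum.inl.injEq] at this
        have := congrArg Fin.val this
        simp only [Fin.val_mk] at this
        omega
  -- partner of each w_j, with its pmRel
  have hpart : ∀ j : Fin q, ∃ i : Fin q,
      pmRel q k i j ∧ M.Adj (Sum.inl i) (Sum.inr j) := by
    intro j
    have hj2 := j.2
    by_cases h1 : (j : ℕ) = q - 1
    · refine ⟨k, Or.inr (Or.inr ⟨h1, rfl⟩), ?_⟩
      have : (Sum.inr j : Fin q ⊕ Fin q) = Sum.inr wlast := by
        apply congrArg; apply Fin.ext; simpa [hwlast]
      rw [this]; exact M.adj_symm hw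
    · by_cases h2 : (j : ℕ) < (k : ℕ)
      · refine ⟨j, Or.inl ⟨h2, rfl⟩, ?_⟩
        exact A (j : ℕ) h2
      · refine ⟨⟨(j : ℕ) + 1, by omega⟩, Or.inr (Or.inl ⟨by omega, by omega, rfl⟩), ?_⟩
        exact B (q - 1 - ((j : ℕ) + 1)) ((j : ℕ) + 1) rfl (by omega) (by omega)
  refine ⟨k, ?_⟩
  have hverts : M.verts = Set.univ := Set.eq_univ_of_forall hM.2
  apply SimpleGraph.Subgraph.ext
  · rw [hverts]; rfl
  · ext x y
    have key : ∀ i j : Fin q, M.Adj (Sum.inl i) (Sum.inr j) ↔ pmRel q k i j := by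
      intro i j
      obtain ⟨i', hrel, hadj⟩ := hpart j
      constructor
      · intro h
        have := huniq (Sum.inr j) _ _ (M.adj_symm h) (M.adj_symm hadj)
        rw [Sum.inl.inj this]; exact hrel
      · intro h
        rw [pmRel_unique_i k i i' j h hrel]; exact hadj
    obtain (i | i) := x <;> obtain (j | j) := y
    · simp only [pMatch]
      exact iff_of_false (fun h => tbg_not_adj_ll _ _ (M.adj_sub h)) (fun h => h)
    · exact key i j
    · constructor
      · intro h; exact (key j i).mp (M.adj_symm h)
      · intro h; exact M.adj_symm ((key j i).mpr h)
    · simp only [pMatch]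
      exact iff_of_false (fun h => tbg_not_adj_rr _ _ (M.adj_sub h)) (fun h => h)

/-- The balanced overlaid Tait graph of the `(2,q)` torus knot has exactly `q` perfect
matchings. -/
theorem stmt_9 (q : ℕ) (hq : 1 ≤ q) :
    {M : (torusBOTGraph q).Subgraph | M.IsPerfectMatching}.ncard = q := by
  have hset : {M : (torusBOTGraph q).Subgraph | M.IsPerfectMatching}
      = Set.range (pMatch q) := by
    ext M
    constructor
    · intro hM
      obtain ⟨k, rfl⟩ := eq_pMatch hq M hM
      exact ⟨k, rfl⟩
    · rintro ⟨k, rfl⟩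
      exact pMatch_isPerfectMatching k
  have hinj : Function.Injective (pMatch q) := by
    intro a b hab
    have h1 : (pMatch q a).Adj (Sum.inl a) (Sum.inr ⟨q - 1, by omega⟩) :=
      Or.inr (Or.inr ⟨rfl, rfl⟩)
    rw [hab] at h1
    have := a.2; have := b.2
    apply Fin.ext
    rcases h1 with h | h | h <;> simp only [Fin.val_mk] at h <;> omega
  rw [hset, ← Set.image_univ, Set.ncard_image_of_injective _ hinj,
    Set.ncard_univ, Nat.card_eq_fintype_card, Fintype.card_fin]
end
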